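/- Let a countable group G act on a probability space (X, μ) by measure-preserving transformations. Then the function χ(g) = μ(Fix(g)), where Fix(g) = {x ∈ X : g·x = x}, is a positive-definite function on G; more precisely, for any g₁,…,gₙ ∈ G and c₁,…,cₙ ∈ ℂ, Σᵢⱼ cᵢ·conj(cⱼ)·μ(Fix(gᵢgⱼ⁻¹)) ≥ 0. -/

import Mathlib

open MeasureTheory

open Finset in
theorem gram_sum_exists {Y : Type*} [DecidableEq Y] {n : ℕ} (f : Fin n → Y) (c : Fin n → ℂ) :
    ∃ r : ℝ, 0 ≤ r ∧
      (∑ i : Fin n, ∑ j : Fin n, if f i = f j then c i * starRingEnd ℂ (c j) else 0)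
        = (r : ℂ) := by
  classical
  set S : Y → ℂ := fun y => ∑ i ∈ univ.filter fun i => f i = y, c i with hS
  refine ⟨∑ y ∈ univ.image f, Complex.normSq (S y),
    Finset.sum_nonneg fun y _ => Complex.normSq_nonneg _, ?_⟩
  have h1 : ∀ i : Fin n, (∑ j, if f i = f j then c i * starRingEnd ℂ (c j) else 0)
      = c i * starRingEnd ℂ (S (f i)) := by
    intro i
    rw [hS, map_sum, Finset.mul_sum, Finset.sum_filter]
    refine Finset.sum_congr rfl fun j _ => ?_
    by_cases h : f i = f j
    · simp [h]
    · simp [h, Ne.symm h]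
  calc (∑ i, ∑ j, if f i = f j then c i * starRingEnd ℂ (c j) else 0)
      = ∑ i, c i * starRingEnd ℂ (S (f i)) := Finset.sum_congr rfl fun i _ => h1 i
    _ = ∑ y ∈ univ.image f, ∑ i ∈ univ.filter fun i => f i = y,
          c i * starRingEnd ℂ (S (f i)) :=
        (Finset.sum_fiberwise_of_maps_to
          (fun i _ => Finset.mem_image_of_mem f (mem_univ i)) _).symm
    _ = ∑ y ∈ univ.image f, (Complex.normSq (S y) : ℂ) := by
        refine Finset.sum_congr rfl fun y _ => ?_
        calc ∑ i ∈ univ.filter fun i => f i = y, c i * starRingEnd ℂ (S (f i))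
            = ∑ i ∈ univ.filter fun i => f i = y, c i * starRingEnd ℂ (S y) := by
              refine Finset.sum_congr rfl fun i hi => ?_
              rw [(Finset.mem_filter.mp hi).2]
          _ = S y * starRingEnd ℂ (S y) := by rw [← Finset.sum_mul]
          _ = (Complex.normSq (S y) : ℂ) := Complex.mul_conj _
    _ = ((∑ y ∈ univ.image f, Complex.normSq (S y) : ℝ) : ℂ) := by norm_cast

/-- The function `g ↦ μ(Fix g)` arising from a measure-preserving action of a
countable group on a probability space is positive-definite. -/
theorem fix_measure_posdef {G X : Type*} [Group G] [Countable G]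
    [MulAction G X] [MeasurableSpace X]
    (μ : Measure X) [IsProbabilityMeasure μ]
    (hmp : ∀ g : G, MeasurePreserving (fun x : X => g • x) μ μ)
    (hfix : ∀ g : G, MeasurableSet {x : X | g • x = x})
    (n : ℕ) (g : Fin n → G) (c : Fin n → ℂ) :
    ∃ r : ℝ, 0 ≤ r ∧
      (∑ i : Fin n, ∑ j : Fin n, c i * starRingEnd ℂ (c j) *
        ((μ {x : X | (g i * (g j)⁻¹) • x = x}).toReal : ℂ)) = (r : ℂ) := by
  classical
  set B : Fin n → Fin n → Set X := fun i j => {x | g i • x = g j • x} with hB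
  have hpre : ∀ i j, (fun x => g j • x) ⁻¹' {x : X | (g i * (g j)⁻¹) • x = x} = B i j := by
    intro i j
    ext x
    simp [hB, mul_smul, inv_smul_smul]
  have hBm : ∀ i j, MeasurableSet (B i j) := fun i j => by
    rw [← hpre i j]; exact (hmp (g j)).measurable (hfix _)
  have hmeq : ∀ i j, μ {x : X | (g i * (g j)⁻¹) • x = x} = μ (B i j) := by
    intro i j
    rw [← hpre i j]
    exact ((hmp (g j)).measure_preimage (hfix _).nullMeasurableSet).symm
  have hterm : ∀ i j : Fin n,
      c i * starRingEnd ℂ (c j) * ((μ {x : X | (g i * (g j)⁻¹) • x = x}).toReal : ℂ)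
      = ∫ x, (B i j).indicator (fun _ => c i * starRingEnd ℂ (c j)) x ∂μ := by
    intro i j
    rw [hmeq, integral_indicator_const _ (hBm i j), Complex.real_smul, Measure.real]
    ring
  have hint : ∀ i j : Fin n,
      Integrable ((B i j).indicator (fun _ => c i * starRingEnd ℂ (c j))) μ :=
    fun i j => (integrable_const _).indicator (hBm i j)
  have hsum : (∑ i : Fin n, ∑ j : Fin n, c i * starRingEnd ℂ (c j) *
        ((μ {x : X | (g i * (g j)⁻¹) • x = x}).toReal : ℂ))
      = ∫ x, ∑ i : Fin n, ∑ j : Fin n,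
          (B i j).indicator (fun _ => c i * starRingEnd ℂ (c j)) x ∂μ := by
    simp_rw [hterm]
    rw [integral_finset_sum _ fun i _ =>
      integrable_finset_sum _ fun j _ => hint i j]
    exact Finset.sum_congr rfl fun i _ =>
      (integral_finset_sum _ fun j _ => hint i j).symm
  set F : X → ℂ := fun x => ∑ i : Fin n, ∑ j : Fin n,
      (B i j).indicator (fun _ => c i * starRingEnd ℂ (c j)) x with hF
  have hpt : ∀ x : X, 0 ≤ (F x).re ∧ F x = ((F x).re : ℂ) := by
    intro x
    obtain ⟨ρ, hρ, heq⟩ := gram_sum_exists (fun i => g i • x) c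
    have hFx : F x = (ρ : ℂ) := by
      rw [hF, ← heq]
      refine Finset.sum_congr rfl fun i _ => Finset.sum_congr rfl fun j _ => ?_
      simp [Set.indicator_apply, hB]
    rw [hFx]
    simpa using hρ
  refine ⟨∫ x, (F x).re ∂μ, integral_nonneg fun x => (hpt x).1, ?_⟩
  rw [hsum]
  calc (∫ x, F x ∂μ) = ∫ x, (((F x).re : ℝ) : ℂ) ∂μ :=
        integral_congr_ae (Filter.Eventually.of_forall fun x => (hpt x).2)
    _ = ((∫ x, (F x).re ∂μ : ℝ) : ℂ) := integral_ofReal
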